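/- Let n and k be natural numbers with n ≥ 2k+2, and let c, a : Fin n → ℝ be coefficient vectors taking values in {0,1} such that the set {i : c_i = 1} has exactly 2k+2 elements and the set {i : a_i = 1} has at most 2k elements. Let μ be the n-fold product of the standard Gaussian measure N(0,1) on ℝ. Then μ{ x : |∑_{i∈Fin n} (c_i − a_i)·x_i| ≤ 1/4 } ≤ 1/3, and consequently ∫ |∑_{i∈Fin n} c_i·x_i − ∑_{i∈Fin n} a_i·x_i| dμ(x) ≥ 1/6. -/

import Mathlib

open MeasureTheory ProbabilityTheory

open Real
open scoped NNReal ENNReal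

lemma gauss_pdf_le (y : ℝ) : gaussianPDFReal 0 1 y ≤ (Real.sqrt (2 * π))⁻¹ := by
  rw [gaussianPDFReal]
  have h1 : rexp (- (y - 0)^2 / (2 * (1:ℝ≥0))) ≤ 1 := by
    rw [Real.exp_le_one_iff]
    exact div_nonpos_of_nonpos_of_nonneg (neg_nonpos.mpr (sq_nonneg _)) (by positivity)
  calc (√(2 * π * (1:ℝ≥0)))⁻¹ * rexp (- (y - 0)^2 / (2 * (1:ℝ≥0)))
      ≤ (√(2 * π * (1:ℝ≥0)))⁻¹ * 1 := by
        apply mul_le_mul_of_nonneg_left h1 (by positivity)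
    _ = (√(2 * π))⁻¹ := by norm_num

lemma gauss_interval (t : ℝ) :
    gaussianReal 0 1 {y | |y + t| ≤ 1 / 4} ≤ ENNReal.ofReal (1 / 3) := by
  have hs : {y : ℝ | |y + t| ≤ 1 / 4} = Set.Icc (-t - 1/4) (-t + 1/4) := by
    ext y
    simp only [Set.mem_setOf_eq, Set.mem_Icc, abs_le]
    constructor
    · rintro ⟨h1, h2⟩; constructor <;> linarith
    · rintro ⟨h1, h2⟩; constructor <;> linarith
  rw [hs, gaussianReal_apply_eq_integral _ one_ne_zero]
  apply ENNReal.ofReal_le_ofReal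
  have hsqrt : (3:ℝ)/2 ≤ Real.sqrt (2 * π) := by
    rw [show (3:ℝ)/2 = Real.sqrt ((3/2)^2) by rw [Real.sqrt_sq]; norm_num]
    apply Real.sqrt_le_sqrt
    nlinarith [Real.pi_gt_three]
  calc ∫ x in Set.Icc (-t - 1/4) (-t + 1/4), gaussianPDFReal 0 1 x
      ≤ ∫ _ in Set.Icc (-t - 1/4) (-t + 1/4), (Real.sqrt (2 * π))⁻¹ := by
        apply setIntegral_mono_on ((integrable_gaussianPDFReal 0 1).integrableOn)
          ((integrableOn_const_iff enorm_ne_top).mpr (Or.inr (by rw [Real.volume_Icc]; exact ENNReal.ofReal_lt_top)))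
          measurableSet_Icc
        intro y _
        exact gauss_pdf_le y
    _ = (volume (Set.Icc (-t - 1/4) (-t + 1/4))).toReal * (Real.sqrt (2 * π))⁻¹ := by
        rw [setIntegral_const, smul_eq_mul, measureReal_def]
    _ = (1/2) * (Real.sqrt (2 * π))⁻¹ := by
        rw [Real.volume_Icc, show (-t + 1/4) - (-t - 1/4) = 1/2 by ring,
          ENNReal.toReal_ofReal (by norm_num)]
    _ ≤ 1/3 := by
        have h2 : (Real.sqrt (2*π))⁻¹ ≤ ((3:ℝ)/2)⁻¹ := inv_anti₀ (by norm_num) hsqrt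
        rw [show ((3:ℝ)/2)⁻¹ = 2/3 by norm_num] at h2
        nlinarith

lemma measure_bound (m : ℕ) (d : Fin (m+1) → ℝ) (j : Fin (m+1)) (hdj : d j = 1) :
    (Measure.pi fun _ : Fin (m+1) => gaussianReal 0 1)
      {x | |∑ i, d i * x i| ≤ 1 / 4} ≤ ENNReal.ofReal (1 / 3) := by
  have MP := measurePreserving_piFinSuccAbove (fun _ : Fin (m+1) => gaussianReal 0 1) j
  set B : Set (ℝ × (Fin m → ℝ)) :=
    {p | |p.1 + ∑ i, d (j.succAbove i) * p.2 i| ≤ 1 / 4} with hB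
  have hmsum : Measurable (fun p : ℝ × (Fin m → ℝ) => p.1 + ∑ i, d (j.succAbove i) * p.2 i) := by
    fun_prop
  have hBm : MeasurableSet B := measurableSet_le hmsum.abs measurable_const
  have hpre : {x : Fin (m+1) → ℝ | |∑ i, d i * x i| ≤ 1 / 4}
      = (MeasurableEquiv.piFinSuccAbove (fun _ => ℝ) j) ⁻¹' B := by
    ext x
    simp only [Set.mem_setOf_eq, Set.mem_preimage, hB,
      MeasurableEquiv.piFinSuccAbove_apply, Fin.insertNthEquiv, Equiv.coe_fn_symm_mk,
      Fin.removeNth]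
    rw [Fin.sum_univ_succAbove (fun i => d i * x i) j, hdj, one_mul]
  rw [hpre, MP.measure_preimage hBm.nullMeasurableSet, Measure.prod_apply_symm hBm]
  calc ∫⁻ z, gaussianReal 0 1 ((fun y => (y, z)) ⁻¹' B)
        ∂(Measure.pi fun _ : Fin m => gaussianReal 0 1)
      ≤ ∫⁻ _, ENNReal.ofReal (1/3) ∂(Measure.pi fun _ : Fin m => gaussianReal 0 1) := by
        apply lintegral_mono
        intro z
        dsimp only
        have h : (fun y => (y, z)) ⁻¹' B = {y | |y + ∑ i, d (j.succAbove i) * z i| ≤ 1/4} := rfl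
        rw [h]
        exact gauss_interval _
    _ = ENNReal.ofReal (1/3) := by rw [lintegral_const, measure_univ, mul_one]

lemma map_eval (N : ℕ) (i : Fin N) :
    (Measure.pi fun _ : Fin N => gaussianReal 0 1).map (fun x => x i) = gaussianReal 0 1 := by
  ext s hs
  rw [Measure.map_apply (measurable_pi_apply i) hs]
  have : (fun x : Fin N → ℝ => x i) ⁻¹' s
      = Set.pi Set.univ (Function.update (fun _ : Fin N => Set.univ) i s) := by
    rw [Set.eval_preimage]
  rw [this, Measure.pi_pi]
  rw [Finset.prod_eq_single i]
  · simp
  · intro b _ hb; simp [Function.update_of_ne hb]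
  · simp

lemma integrable_id_gauss : Integrable (fun y : ℝ => y) (gaussianReal 0 1) := by
  rw [gaussianReal_of_var_ne_zero _ one_ne_zero]
  rw [integrable_withDensity_iff (measurable_gaussianPDF 0 1)
    (ae_of_all _ fun x => ENNReal.ofReal_lt_top)]
  have key : Integrable (fun y : ℝ => (√(2 * π))⁻¹ * (y * rexp (-(1/2 : ℝ) * y ^ 2))) volume :=
    (integrable_mul_exp_neg_mul_sq (by norm_num : (0:ℝ) < 1/2)).const_mul _
  apply key.congr
  apply ae_of_all
  intro y
  dsimp only
  rw [show gaussianPDF 0 1 = fun x => ENNReal.ofReal (gaussianPDFReal 0 1 x) from gaussianPDF_def 0 1]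
  dsimp only
  rw [ENNReal.toReal_ofReal (gaussianPDFReal_nonneg 0 1 y), gaussianPDFReal]
  simp only [NNReal.coe_one, mul_one, sub_zero]
  rw [show (-(1/2:ℝ))*y^2 = -y^2/2 by ring]
  ring

lemma integrable_eval (N : ℕ) (i : Fin N) :
    Integrable (fun x : Fin N → ℝ => x i) (Measure.pi fun _ : Fin N => gaussianReal 0 1) := by
  have h := integrable_id_gauss
  rw [← map_eval N i] at h
  exact (integrable_map_measure measurable_id.aestronglyMeasurable
    (measurable_pi_apply i).aemeasurable).mp h

/-- if `f₁(x) = ∑ c_i x_i` is `(2k+2)`-linear and `f₂(x) = ∑ a_i x_i`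
is `2k`-linear, both with 0/1 coefficients, then under the standard Gaussian product
measure the probability that `|f₁(x) − f₂(x)| ≤ 1/4` is at most `1/3`, and
consequently the `ℓ₁`-distance between `f₁` and `f₂` is at least `1/6`. -/
theorem stmt_17 (n k : ℕ) (hn : 2 * k + 2 ≤ n)
    (c a : Fin n → ℝ)
    (hc01 : ∀ i, c i = 0 ∨ c i = 1) (ha01 : ∀ i, a i = 0 ∨ a i = 1)
    (hc : (Finset.univ.filter fun i => c i = 1).card = 2 * k + 2)
    (ha : (Finset.univ.filter fun i => a i = 1).card ≤ 2 * k) :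
    (Measure.pi fun _ : Fin n => gaussianReal 0 1)
        {x | |∑ i, (c i - a i) * x i| ≤ 1 / 4} ≤ ENNReal.ofReal (1 / 3) ∧
      (1 / 6 : ℝ) ≤ ∫ x : Fin n → ℝ, |(∑ i, c i * x i) - ∑ i, a i * x i|
          ∂(Measure.pi fun _ : Fin n => gaussianReal 0 1) := by
  have hns : ¬ (Finset.univ.filter fun i => c i = 1) ⊆ (Finset.univ.filter fun i => a i = 1) :=
    fun h => absurd (Finset.card_le_card h) (by omega)
  obtain ⟨j, hjc, hja⟩ := Finset.not_subset.mp hns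
  have hcj : c j = 1 := (Finset.mem_filter.mp hjc).2
  have haj : a j = 0 := by
    rcases ha01 j with h | h
    · exact h
    · exact absurd ((Finset.mem_filter (s := Finset.univ)).mpr ⟨Finset.mem_univ j, h⟩) hja
  obtain ⟨m, rfl⟩ : ∃ m, n = m + 1 := ⟨n - 1, by omega⟩
  set μpi := Measure.pi fun _ : Fin (m+1) => gaussianReal 0 1 with hμpi
  have hdj : c j - a j = 1 := by rw [hcj, haj]; ring
  have hmeas : μpi {x | |∑ i, (c i - a i) * x i| ≤ 1 / 4} ≤ ENNReal.ofReal (1 / 3) :=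
    measure_bound m (fun i => c i - a i) j hdj
  refine ⟨hmeas, ?_⟩
  set A := {x : Fin (m+1) → ℝ | |∑ i, (c i - a i) * x i| ≤ 1/4} with hA
  have hgm : Measurable (fun x : Fin (m+1) → ℝ => ∑ i, (c i - a i) * x i) := by fun_prop
  have hmA : MeasurableSet A := measurableSet_le hgm.abs measurable_const
  have hint : Integrable (fun x : Fin (m+1) → ℝ => ∑ i, (c i - a i) * x i) μpi := by
    apply integrable_finset_sum
    intro i _
    exact (integrable_eval (m+1) i).const_mul (c i - a i)
  have hintF : Integrable (fun x : Fin (m+1) → ℝ => |∑ i, (c i - a i) * x i|) μpi := hint.abs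
  have hμAc : ENNReal.ofReal (2/3) ≤ μpi Aᶜ := by
    rw [measure_compl hmA (measure_ne_top _ _), measure_univ]
    apply ENNReal.le_sub_of_add_le_right (measure_ne_top _ _)
    calc ENNReal.ofReal (2/3) + μpi A ≤ ENNReal.ofReal (2/3) + ENNReal.ofReal (1/3) :=
          add_le_add_right hmeas _
      _ = 1 := by rw [← ENNReal.ofReal_add (by norm_num) (by norm_num)]; norm_num
  have hAc : (2/3 : ℝ) ≤ (μpi Aᶜ).toReal :=
    (ENNReal.ofReal_le_iff_le_toReal (measure_ne_top _ _)).mp hμAc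
  have hsum_eq : ∀ x : Fin (m+1) → ℝ,
      (∑ i, c i * x i) - ∑ i, a i * x i = ∑ i, (c i - a i) * x i := by
    intro x
    rw [← Finset.sum_sub_distrib]
    exact Finset.sum_congr rfl fun i _ => by ring
  calc (1/6 : ℝ) = (1/4) * (2/3) := by norm_num
    _ ≤ (1/4) * (μpi Aᶜ).toReal := by linarith
    _ = ∫ _ in Aᶜ, (1/4 : ℝ) ∂μpi := by rw [setIntegral_const, smul_eq_mul, mul_comm, measureReal_def]
    _ ≤ ∫ x in Aᶜ, |∑ i, (c i - a i) * x i| ∂μpi := by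
        apply setIntegral_mono_on ((integrableOn_const_iff enorm_ne_top).mpr (Or.inr (measure_lt_top _ _)))
          hintF.integrableOn hmA.compl
        intro x hx
        have : ¬ |∑ i, (c i - a i) * x i| ≤ 1/4 := hx
        linarith [not_le.mp this]
    _ ≤ ∫ x, |∑ i, (c i - a i) * x i| ∂μpi :=
        setIntegral_le_integral hintF (ae_of_all _ fun x => abs_nonneg _)
    _ = ∫ x, |(∑ i, c i * x i) - ∑ i, a i * x i| ∂μpi := by
        apply integral_congr_ae
        apply ae_of_all
        intro x
        dsimp only
        rw [hsum_eq x]
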